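/- In a semigraph algebra, every word in the generators 𝒯 ∪ 𝒫 ∪ 𝒯* ∪ 𝒫* is a partial isometry, and the set of words forms an inverse semigroup (modulo zero): the product of two words is a word or zero, the adjoint of a word is a word, and source and range projections of all words commute with each other. -/

import Mathlib

/-- The set of minimal common extensions `𝒯₁^{(min)}(x,y)` of `x` and `y`:
pairs `(α,β)` in `𝒯₁` with `xα = yβ ≠ 0` of degree `d(x) ⊔ d(y)`. -/
def mceSet {k X : Type*} [Ring X] (T1 : Set X) (deg : X → (k →₀ ℕ))
    (x y : X) : Set (X × X) :=
  {ab | ab.1 ∈ T1 ∧ ab.2 ∈ T1 ∧ x * ab.1 ≠ 0 ∧ x * ab.1 = y * ab.2 ∧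
    deg (x * ab.1) = deg x ⊔ deg y}

/-- A `k`-semigraph algebra (Definition `DefSemigraphAlgebra`): a `*`-algebra
generated by a commuting multiplicatively closed set `𝒫` of projections and a
set `𝒯` of nonzero partial isometries forming a non-unital finitely aligned
`k`-semigraph (with unitization `𝒯₁ = 𝒯 ∪ {1}`), subject to the commutation
relations `p x = x q`, the expansion of `x* y` over minimal common extensions,
and carrying a gauge action (equivalently, it is the quotient of the free
`*`-algebra by a subset of the fiber space). -/
structure SemigraphAlgebra (k : Type*) (X : Type*) [Ring X] [StarRing X]
    [Algebra ℂ X] where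
  P : Set X
  T : Set X
  deg : X → (k →₀ ℕ)
  P_isProj : ∀ p ∈ P, p * p = p ∧ star p = p
  P_comm : ∀ p ∈ P, ∀ q ∈ P, p * q = q * p
  P_mulClosed : ∀ p ∈ P, ∀ q ∈ P, p * q ∈ P
  disjoint : ∀ t ∈ T, t ∉ P
  T_ne_zero : ∀ t ∈ T, t ≠ 0
  T_pisom : ∀ t ∈ T, t * star t * t = t
  T_mulClosed : ∀ s ∈ T, ∀ t ∈ T, s * t ≠ 0 → s * t ∈ T
  one_notMem : (1 : X) ∉ T
  deg_one : deg 1 = 0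
  deg_pos : ∀ t ∈ T, deg t ≠ 0
  deg_mul : ∀ s ∈ T, ∀ t ∈ T, s * t ≠ 0 → deg (s * t) = deg s + deg t
  ufp : ∀ x ∈ T, ∀ n₁ n₂ : k →₀ ℕ, deg x = n₁ + n₂ →
    ∃! ab : X × X, ab.1 ∈ insert (1:X) T ∧ ab.2 ∈ insert (1:X) T ∧
      x = ab.1 * ab.2 ∧ deg ab.1 = n₁ ∧ deg ab.2 = n₂
  finitelyAligned : ∀ x ∈ insert (1:X) T, ∀ y ∈ insert (1:X) T,
    (mceSet (insert (1:X) T) deg x y).Finite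
  P_commute_T : ∀ x ∈ T, ∀ p ∈ P, ∃ q ∈ P, p * x = x * q
  expansion : ∀ x (hx : x ∈ T), ∀ y (hy : y ∈ T), ∃ q : X × X → X,
    (∀ ab ∈ mceSet (insert (1:X) T) deg x y, q ab ∈ P) ∧
    star x * y =
      ∑ ab ∈ (finitelyAligned x (Set.mem_insert_of_mem _ hx)
          y (Set.mem_insert_of_mem _ hy)).toFinset,
        ab.1 * q ab * star ab.2
  gauge : ∀ lam : k → ℂ, (∀ i, ‖lam i‖ = 1) →
    ∃ σ : X ≃ₐ[ℂ] X, (∀ p ∈ P, σ p = p) ∧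
      ∀ t ∈ T, σ t = (∏ i ∈ (deg t).support, lam i ^ (deg t i)) • t

namespace SemigraphAlgebra

variable {k X : Type*} [Ring X] [StarRing X] [Algebra ℂ X]

/-- `𝒯₁`, the unitization of the semigraph `𝒯`. -/
def T1 (A : SemigraphAlgebra k X) : Set X := insert 1 A.T

end SemigraphAlgebra

namespace SemigraphAlgebra

variable {k X : Type*} [Ring X] [StarRing X] [Algebra ℂ X]

/-- A word in the generators `𝒯 ∪ 𝒫 ∪ 𝒯* ∪ 𝒫*`, encoded as a nonempty list of
letters, each a generator together with a flag recording a star. -/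
def IsWordList (A : SemigraphAlgebra k X) (l : List (X × Bool)) : Prop :=
  l ≠ [] ∧ ∀ a ∈ l, a.1 ∈ A.T ∪ A.P

/-- The element of `X` represented by a word. -/
def evalWord (l : List (X × Bool)) : X :=
  (l.map fun a => if a.2 then star a.1 else a.1).prod

/-- The formal adjoint of a word. -/
def starWord (l : List (X × Bool)) : List (X × Bool) :=
  l.reverse.map fun a => (a.1, !a.2)

end SemigraphAlgebra

namespace SemigraphAlgebra

variable {k X : Type*} [Ring X] [StarRing X] [Algebra ℂ X] (A : SemigraphAlgebra k X)

/-- `𝒫₁ = 𝒫 ∪ {1}`. -/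
def P1 : Set X := insert 1 A.P

lemma one_mem_P1 : (1:X) ∈ A.P1 := Set.mem_insert _ _

lemma mem_T1 {x : X} : x ∈ A.T1 ↔ x = 1 ∨ x ∈ A.T := Set.mem_insert_iff

lemma one_mem_T1 : (1:X) ∈ A.T1 := Set.mem_insert _ _

lemma p1_star {p : X} (hp : p ∈ A.P1) : star p = p := by
  rcases hp with rfl | hp
  · exact star_one X
  · exact (A.P_isProj p hp).2

lemma p1_idem {p : X} (hp : p ∈ A.P1) : p * p = p := by
  rcases hp with rfl | hp
  · exact one_mul 1
  · exact (A.P_isProj p hp).1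

lemma p1_comm {p q : X} (hp : p ∈ A.P1) (hq : q ∈ A.P1) : p * q = q * p := by
  rcases hp with rfl | hp
  · rw [one_mul, mul_one]
  · rcases hq with rfl | hq
    · rw [one_mul, mul_one]
    · exact A.P_comm p hp q hq

lemma p1_mul {p q : X} (hp : p ∈ A.P1) (hq : q ∈ A.P1) : p * q ∈ A.P1 := by
  rcases hp with rfl | hp
  · rw [one_mul]; exact hq
  · rcases hq with rfl | hq
    · rw [mul_one]; exact Set.mem_insert_of_mem _ hp
    · exact Set.mem_insert_of_mem _ (A.P_mulClosed p hp q hq)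

lemma t1_mul {a b : X} (ha : a ∈ A.T1) (hb : b ∈ A.T1) (h : a * b ≠ 0) : a * b ∈ A.T1 := by
  rcases ha with rfl | ha
  · rw [one_mul]; exact hb
  · rcases hb with rfl | hb
    · rw [mul_one]; exact Set.mem_insert_of_mem _ ha
    · exact Set.mem_insert_of_mem _ (A.T_mulClosed a ha b hb h)

lemma deg_mul1 {a b : X} (ha : a ∈ A.T1) (hb : b ∈ A.T1) (h : a * b ≠ 0) :
    A.deg (a * b) = A.deg a + A.deg b := by
  rcases ha with rfl | ha
  · rw [one_mul, A.deg_one, zero_add]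
  · rcases hb with rfl | hb
    · rw [mul_one, A.deg_one, add_zero]
    · exact A.deg_mul a ha b hb h

lemma swap {x p : X} (hx : x ∈ A.T1) (hp : p ∈ A.P1) : ∃ q ∈ A.P1, p * x = x * q := by
  rcases hp with rfl | hp
  · exact ⟨1, A.one_mem_P1, by rw [one_mul, mul_one]⟩
  · rcases hx with rfl | hx
    · exact ⟨p, Set.mem_insert_of_mem _ hp, by rw [one_mul, mul_one]⟩
    · obtain ⟨q, hq, h⟩ := A.P_commute_T x hx p hp
      exact ⟨q, Set.mem_insert_of_mem _ hq, h⟩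

lemma swap_star {x p : X} (hx : x ∈ A.T1) (hp : p ∈ A.P1) :
    ∃ q ∈ A.P1, star x * p = q * star x := by
  obtain ⟨q, hq, h⟩ := A.swap hx hp
  refine ⟨q, hq, ?_⟩
  have h2 := congrArg star h
  rwa [star_mul, star_mul, A.p1_star hp, A.p1_star hq] at h2

lemma mce_self {x : X} (hx : x ∈ A.T) :
    mceSet (insert (1:X) A.T) A.deg x x = {((1:X), (1:X))} := by
  ext e
  simp only [mceSet, Set.mem_setOf_eq, Set.mem_singleton_iff, Prod.ext_iff]
  constructor
  · rintro ⟨h1, h2, hne, heq, hdeg⟩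
    rw [sup_idem] at hdeg
    have he1 : e.1 = 1 := by
      rcases h1 with h1 | h1
      · exact h1
      · exfalso
        rw [A.deg_mul x hx e.1 h1 hne] at hdeg
        exact A.deg_pos e.1 h1 (add_eq_left.1 hdeg)
    refine ⟨he1, ?_⟩
    rw [he1, mul_one] at heq
    rcases h2 with h2 | h2
    · exact h2
    · exfalso
      have hne2 : x * e.2 ≠ 0 := by rw [← heq]; exact A.T_ne_zero x hx
      have : A.deg (x * e.2) = A.deg x := by rw [← heq]
      rw [A.deg_mul x hx e.2 h2 hne2] at this
      exact A.deg_pos e.2 h2 (add_eq_left.1 this)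
  · rintro ⟨h1, h2⟩
    rw [h1, h2]
    refine ⟨Set.mem_insert _ _, Set.mem_insert _ _, ?_, rfl, ?_⟩
    · rw [mul_one]; exact A.T_ne_zero x hx
    · rw [mul_one, sup_idem]

lemma mce_empty {x y : X} (hx : x ∈ A.T) (hy : y ∈ A.T) (hd : A.deg x = A.deg y)
    (hne : x ≠ y) : mceSet (insert (1:X) A.T) A.deg x y = ∅ := by
  ext e
  simp only [mceSet, Set.mem_setOf_eq, Set.mem_empty_iff_false, iff_false, not_and]
  intro h1 h2 hne0 heq hdeg
  rw [← hd, sup_idem] at hdeg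
  have he1 : e.1 = 1 := by
    rcases h1 with h1 | h1
    · exact h1
    · exfalso
      rw [A.deg_mul x hx e.1 h1 hne0] at hdeg
      exact A.deg_pos e.1 h1 (add_eq_left.1 hdeg)
  rw [he1, mul_one] at heq hne0 hdeg
  have he2 : e.2 = 1 := by
    rcases h2 with h2 | h2
    · exact h2
    · exfalso
      have hne2 : y * e.2 ≠ 0 := by rw [← heq]; exact hne0
      have hdd : A.deg (y * e.2) = A.deg x := by rw [← heq]
      rw [A.deg_mul y hy e.2 h2 hne2, ← hd] at hdd
      exact A.deg_pos e.2 h2 (add_eq_left.1 hdd)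
  rw [he2, mul_one] at heq
  exact hne heq

lemma orth_of_ne {μ ν : X} (hμ : μ ∈ A.T1) (hν : ν ∈ A.T1)
    (hd : A.deg μ = A.deg ν) (hne : μ ≠ ν) : star μ * ν = 0 := by
  rcases hμ with rfl | hμ
  · rcases hν with rfl | hν
    · exact absurd rfl hne
    · exfalso
      exact A.deg_pos ν hν (by rw [← hd, A.deg_one])
  · rcases hν with rfl | hν
    · exfalso
      exact A.deg_pos μ hμ (by rw [hd, A.deg_one])
    · obtain ⟨qf, hqf, hexp⟩ := A.expansion μ hμ ν hν
      have hfin : (A.finitelyAligned μ (Set.mem_insert_of_mem _ hμ) ν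
          (Set.mem_insert_of_mem _ hν)).toFinset = ∅ := by
        apply Finset.ext
        intro e
        rw [Set.Finite.mem_toFinset, A.mce_empty hμ hν hd hne]
        simp
      rw [hfin, Finset.sum_empty] at hexp
      exact hexp

lemma source {x : X} (hx : x ∈ A.T1) :
    ∃ q ∈ A.P1, star x * x = q ∧ x * q = x ∧ q * star x = star x := by
  rcases hx with rfl | hxT
  · exact ⟨1, A.one_mem_P1, by simp, by simp, by simp⟩
  · obtain ⟨qf, hqf, hexp⟩ := A.expansion x hxT x hxT
    have hfin : (A.finitelyAligned x (Set.mem_insert_of_mem _ hxT) x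
        (Set.mem_insert_of_mem _ hxT)).toFinset = {((1:X), (1:X))} := by
      apply Finset.ext
      intro e
      rw [Set.Finite.mem_toFinset, A.mce_self hxT]
      simp
    rw [hfin, Finset.sum_singleton] at hexp
    simp only [one_mul, star_one, mul_one] at hexp
    have hqP : qf (1, 1) ∈ A.P1 := by
      refine Set.mem_insert_of_mem _ (hqf _ ?_)
      rw [A.mce_self hxT]
      exact Set.mem_singleton _
    refine ⟨qf (1,1), hqP, hexp, ?_, ?_⟩
    · rw [← hexp, ← mul_assoc]; exact A.T_pisom x hxT
    · have h2 : x * qf (1,1) = x := by rw [← hexp, ← mul_assoc]; exact A.T_pisom x hxT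
      have h3 := congrArg star h2
      rwa [star_mul, A.p1_star hqP] at h3

lemma prod_eq_one {a b : X} (ha : a ∈ A.T1) (hb : b ∈ A.T1) (h : a * b = 1)
    (h0 : (1:X) ≠ 0) : a = 1 ∧ b = 1 := by
  rcases ha with rfl | ha
  · rw [one_mul] at h; exact ⟨rfl, h⟩
  · rcases hb with rfl | hb
    · rw [mul_one] at h; exact ⟨h, rfl⟩
    · exfalso
      have : a * b ∈ A.T := A.T_mulClosed a ha b hb (by rw [h]; exact h0)
      rw [h] at this
      exact A.one_notMem this

lemma factor_unique {a b a' b' : X} (ha : a ∈ A.T1) (hb : b ∈ A.T1)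
    (ha' : a' ∈ A.T1) (hb' : b' ∈ A.T1) (heq : a * b = a' * b')
    (h0 : a * b ≠ 0) (hd : A.deg a = A.deg a') : a = a' ∧ b = b' := by
  have hz : a * b ∈ A.T1 := A.t1_mul ha hb h0
  rcases hz with hz1 | hzT
  · have h10 : (1:X) ≠ 0 := by rw [← hz1]; exact h0
    obtain ⟨e1, e2⟩ := A.prod_eq_one ha hb hz1 h10
    obtain ⟨e3, e4⟩ := A.prod_eq_one ha' hb' (by rw [← heq]; exact hz1) h10
    exact ⟨e1.trans e3.symm, e2.trans e4.symm⟩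
  · have hdz : A.deg (a*b) = A.deg a + A.deg b := A.deg_mul1 ha hb h0
    have h0' : a' * b' ≠ 0 := heq ▸ h0
    have hdz' : A.deg (a'*b') = A.deg a' + A.deg b' := A.deg_mul1 ha' hb' h0'
    have hdb : A.deg b' = A.deg b := by
      have h5 : A.deg a + A.deg b = A.deg a + A.deg b' := by
        rw [← hdz, heq, hdz', hd]
      exact (add_left_cancel h5).symm
    obtain ⟨u, _, huniq⟩ := A.ufp (a*b) hzT (A.deg a) (A.deg b) hdz
    have e1 := huniq (a, b) ⟨ha, hb, rfl, rfl, rfl⟩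
    have e2 := huniq (a', b') ⟨ha', hb', heq, hd.symm, hdb⟩
    have e3 : (a, b) = ((a' : X), b') := e1.trans e2.symm
    exact ⟨congrArg Prod.fst e3, congrArg Prod.snd e3⟩


lemma expansion1 (h0 : (1:X) ≠ 0) {x y : X} (hx : x ∈ A.T1) (hy : y ∈ A.T1) :
    ∃ (s : Finset (X × X)) (q : X × X → X),
      (∀ e ∈ s, e.1 ∈ A.T1 ∧ e.2 ∈ A.T1 ∧ q e ∈ A.P1 ∧ x * e.1 = y * e.2 ∧ x * e.1 ≠ 0 ∧
        A.deg x + A.deg e.1 = A.deg x ⊔ A.deg y ∧ A.deg y + A.deg e.2 = A.deg x ⊔ A.deg y) ∧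
      star x * y = ∑ e ∈ s, e.1 * q e * star e.2 := by
  rcases hx with rfl | hx
  · refine ⟨{(y, 1)}, fun _ => 1, ?_, ?_⟩
    · intro e he
      rw [Finset.mem_singleton] at he
      subst he
      refine ⟨hy, A.one_mem_T1, A.one_mem_P1, by rw [one_mul, mul_one], ?_, ?_, ?_⟩
      · rw [one_mul]
        rcases hy with rfl | hy
        · exact h0
        · exact A.T_ne_zero y hy
      · rw [A.deg_one, zero_add]
        exact (sup_eq_right.2 zero_le).symm
      · rw [A.deg_one, add_zero]
        exact (sup_eq_right.2 zero_le).symm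
    · simp
  · rcases hy with rfl | hy
    · refine ⟨{(1, x)}, fun _ => 1, ?_, ?_⟩
      · intro e he
        rw [Finset.mem_singleton] at he
        subst he
        refine ⟨A.one_mem_T1, Set.mem_insert_of_mem _ hx, A.one_mem_P1,
          by rw [one_mul, mul_one], ?_, ?_, ?_⟩
        · rw [mul_one]; exact A.T_ne_zero x hx
        · rw [A.deg_one, add_zero]
          exact (sup_eq_left.2 zero_le).symm
        · rw [A.deg_one, zero_add]
          exact (sup_eq_left.2 zero_le).symm
      · simp
    · obtain ⟨qf, hqf, hexp⟩ := A.expansion x hx y hy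
      refine ⟨_, qf, ?_, hexp⟩
      intro e he
      rw [Set.Finite.mem_toFinset] at he
      obtain ⟨h1, h2, h3, h4, h5⟩ := he
      have h6 : y * e.2 ≠ 0 := by rw [← h4]; exact h3
      refine ⟨h1, h2, Set.mem_insert_of_mem _ (hqf e ⟨h1, h2, h3, h4, h5⟩), h4, h3, ?_, ?_⟩
      · rw [← A.deg_mul1 (Set.mem_insert_of_mem _ hx) h1 h3, h5]
      · rw [← A.deg_mul1 (Set.mem_insert_of_mem _ hy) h2 h6, ← h4, h5]

/-- The value of a standard triple `(α, p, β)`, namely `α p β*`. -/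
def tval (τ : X × X × X) : X := τ.1 * τ.2.1 * star τ.2.2

lemma tval_ne_zero_left {τ : X × X × X} (h : tval τ ≠ 0) : τ.1 ≠ 0 := by
  intro h1
  exact h (by simp [tval, h1])

lemma tval_ne_zero_right {τ : X × X × X} (h : tval τ ≠ 0) : τ.2.2 ≠ 0 := by
  intro h1
  exact h (by simp [tval, h1])

lemma std_mul (h0 : (1:X) ≠ 0) {α p β γ q δ : X}
    (hα : α ∈ A.T1) (hp : p ∈ A.P1) (hβ : β ∈ A.T1)
    (hγ : γ ∈ A.T1) (hq : q ∈ A.P1) (hδ : δ ∈ A.T1) :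
    ∃ s : Finset (X × X × X),
      (∀ ρ ∈ s, ρ.1 ∈ A.T1 ∧ ρ.2.1 ∈ A.P1 ∧ ρ.2.2 ∈ A.T1 ∧ tval ρ ≠ 0 ∧
        ∃ e : X × X, e.1 ∈ A.T1 ∧ e.2 ∈ A.T1 ∧ β * e.1 = γ * e.2 ∧ β * e.1 ≠ 0 ∧
          ρ.1 = α * e.1 ∧ ρ.2.2 = δ * e.2 ∧
          A.deg β + A.deg e.1 = A.deg β ⊔ A.deg γ ∧
          A.deg γ + A.deg e.2 = A.deg β ⊔ A.deg γ) ∧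
      (∀ ρ ∈ s, ∀ ρ' ∈ s, ρ.1 = ρ'.1 → ρ = ρ') ∧
      (∀ ρ ∈ s, ∀ ρ' ∈ s, ρ.2.2 = ρ'.2.2 → ρ = ρ') ∧
      (α * p * star β) * (γ * q * star δ) = ∑ ρ ∈ s, tval ρ := by
  classical
  obtain ⟨s₀, qf, hspec, hexp⟩ := A.expansion1 h0 hβ hγ
  have hcex : ∀ e : X × X, ∃ c, e ∈ s₀ → (c ∈ A.P1 ∧ p * e.1 = e.1 * c) := by
    intro e
    by_cases he : e ∈ s₀
    · obtain ⟨c, hc1, hc2⟩ := A.swap (hspec e he).1 hp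
      exact ⟨c, fun _ => ⟨hc1, hc2⟩⟩
    · exact ⟨1, fun h => absurd h he⟩
  choose c hcspec using hcex
  have hdex : ∀ e : X × X, ∃ d, e ∈ s₀ → (d ∈ A.P1 ∧ star e.2 * q = d * star e.2) := by
    intro e
    by_cases he : e ∈ s₀
    · obtain ⟨d, hd1, hd2⟩ := A.swap_star (hspec e he).2.1 hq
      exact ⟨d, fun _ => ⟨hd1, hd2⟩⟩
    · exact ⟨1, fun h => absurd h he⟩
  choose d hdspec using hdex
  set ρf : X × X → X × X × X := fun e => (α * e.1, c e * qf e * d e, δ * e.2) with hρf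
  have hterm : ∀ e ∈ s₀, (α * p) * (e.1 * qf e * star e.2) * (q * star δ) = tval (ρf e) := by
    intro e he
    obtain ⟨hce, hcswap⟩ := hcspec e he
    obtain ⟨hde, hdswap⟩ := hdspec e he
    have key : ∀ z : X, p * (e.1 * z) = e.1 * (c e * z) := fun z => by
      rw [← mul_assoc, hcswap, mul_assoc]
    have key2 : ∀ z : X, star e.2 * (q * z) = d e * (star e.2 * z) := fun z => by
      rw [← mul_assoc, hdswap, mul_assoc]
    calc (α * p) * (e.1 * qf e * star e.2) * (q * star δ)
        = α * (p * (e.1 * (qf e * (star e.2 * (q * star δ))))) := by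
          simp only [mul_assoc]
      _ = α * (e.1 * (c e * (qf e * (d e * (star e.2 * star δ))))) := by
          rw [key2, key]
      _ = tval (ρf e) := by
          simp only [tval, hρf, star_mul, mul_assoc]
  have hprod : (α * p * star β) * (γ * q * star δ)
      = ∑ e ∈ s₀, (α * p) * (e.1 * qf e * star e.2) * (q * star δ) := by
    have h1 : (α * p * star β) * (γ * q * star δ)
        = (α * p) * (star β * γ) * (q * star δ) := by simp only [mul_assoc]
    rw [h1, hexp, Finset.mul_sum, Finset.sum_mul]
  have hprod2 : (α * p * star β) * (γ * q * star δ) = ∑ e ∈ s₀, tval (ρf e) :=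
    hprod.trans (Finset.sum_congr rfl hterm)
  set s₁ : Finset (X × X) := s₀.filter (fun e => tval (ρf e) ≠ 0) with hs₁
  have hsum1 : ∑ e ∈ s₀, tval (ρf e) = ∑ e ∈ s₁, tval (ρf e) :=
    (Finset.sum_filter_of_ne (fun e _ h => h)).symm
  have hinj : ∀ e ∈ s₁, ∀ e' ∈ s₁, ρf e = ρf e' → e = e' := by
    intro e he e' he' heq
    rw [hs₁, Finset.mem_filter] at he he'
    obtain ⟨he, hne⟩ := he
    obtain ⟨he', hne'⟩ := he'
    have h1 : α * e.1 = α * e'.1 := congrArg Prod.fst heq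
    have h2 : δ * e.2 = δ * e'.2 := congrArg (fun ρ => ρ.2.2) heq
    have hz1 : α * e.1 ≠ 0 := tval_ne_zero_left hne
    have hz2 : δ * e.2 ≠ 0 := tval_ne_zero_right hne
    obtain ⟨_, g2⟩ := A.factor_unique hα (hspec e he).1 hα (hspec e' he').1 h1 hz1 rfl
    obtain ⟨_, g4⟩ := A.factor_unique hδ (hspec e he).2.1 hδ (hspec e' he').2.1 h2 hz2 rfl
    exact Prod.ext_iff.2 ⟨g2, g4⟩
  refine ⟨s₁.image ρf, ?_, ?_, ?_, ?_⟩
  · intro ρ hρ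
    obtain ⟨e, he, rfl⟩ := Finset.mem_image.1 hρ
    rw [hs₁, Finset.mem_filter] at he
    obtain ⟨he, hne⟩ := he
    obtain ⟨m1, m2, m3, m4, m5, m6, m7⟩ := hspec e he
    refine ⟨A.t1_mul hα m1 (tval_ne_zero_left hne),
      A.p1_mul (A.p1_mul (hcspec e he).1 m3) (hdspec e he).1,
      A.t1_mul hδ m2 (tval_ne_zero_right hne), hne,
      e, m1, m2, m4, m5, rfl, rfl, m6, m7⟩
  · intro ρ hρ ρ' hρ' heq
    obtain ⟨e, he, rfl⟩ := Finset.mem_image.1 hρ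
    obtain ⟨e', he', rfl⟩ := Finset.mem_image.1 hρ'
    have hef : e = e' := by
      rw [hs₁, Finset.mem_filter] at he he'
      have hz1 : α * e.1 ≠ 0 := tval_ne_zero_left he.2
      obtain ⟨_, g2⟩ := A.factor_unique hα (hspec e he.1).1 hα (hspec e' he'.1).1 heq hz1 rfl
      -- now recover the second components
      have h3 : γ * e.2 = γ * e'.2 := by
        rw [← (hspec e he.1).2.2.2.1, ← (hspec e' he'.1).2.2.2.1, g2]
      have hz3 : γ * e.2 ≠ 0 := by
        rw [← (hspec e he.1).2.2.2.1]
        exact (hspec e he.1).2.2.2.2.1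
      obtain ⟨_, g4⟩ := A.factor_unique hγ (hspec e he.1).2.1 hγ (hspec e' he'.1).2.1 h3 hz3 rfl
      exact Prod.ext_iff.2 ⟨g2, g4⟩
    rw [hef]
  · intro ρ hρ ρ' hρ' heq
    obtain ⟨e, he, rfl⟩ := Finset.mem_image.1 hρ
    obtain ⟨e', he', rfl⟩ := Finset.mem_image.1 hρ'
    have hef : e = e' := by
      rw [hs₁, Finset.mem_filter] at he he'
      have hz2 : δ * e.2 ≠ 0 := tval_ne_zero_right he.2
      obtain ⟨_, g4⟩ := A.factor_unique hδ (hspec e he.1).2.1 hδ (hspec e' he'.1).2.1 heq hz2 rfl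
      have h3 : β * e.1 = β * e'.1 := by
        rw [(hspec e he.1).2.2.2.1, (hspec e' he'.1).2.2.2.1, g4]
      have hz3 : β * e.1 ≠ 0 := (hspec e he.1).2.2.2.2.1
      obtain ⟨_, g2⟩ := A.factor_unique hβ (hspec e he.1).1 hβ (hspec e' he'.1).1 h3 hz3 rfl
      exact Prod.ext_iff.2 ⟨g2, g4⟩
    rw [hef]
  · rw [hprod2, hsum1, Finset.sum_image hinj]


/-- A representation of `w` as a sum of standard terms `α p β*` with uniform
degrees and pairwise distinct legs. -/
def Rep (A : SemigraphAlgebra k X) (w : X) : Prop :=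
  ∃ s : Finset (X × X × X),
    (∀ τ ∈ s, τ.1 ∈ A.T1 ∧ τ.2.1 ∈ A.P1 ∧ τ.2.2 ∈ A.T1 ∧ tval τ ≠ 0) ∧
    (∀ τ ∈ s, ∀ σ ∈ s, A.deg τ.1 = A.deg σ.1 ∧ A.deg τ.2.2 = A.deg σ.2.2) ∧
    (∀ τ ∈ s, ∀ σ ∈ s, τ ≠ σ → τ.1 ≠ σ.1 ∧ τ.2.2 ≠ σ.2.2) ∧
    w = ∑ τ ∈ s, tval τ

lemma rep_mul (h0 : (1:X) ≠ 0) {w w' : X} (hw : A.Rep w) (hw' : A.Rep w') :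
    A.Rep (w * w') := by
  classical
  obtain ⟨s, hmem, hdeg, hdist, rfl⟩ := hw
  obtain ⟨s', hmem', hdeg', hdist', rfl⟩ := hw'
  have key : ∀ ts : (X × X × X) × (X × X × X), ∃ uu : Finset (X × X × X),
      ts.1 ∈ s → ts.2 ∈ s' →
      ((∀ ρ ∈ uu, ρ.1 ∈ A.T1 ∧ ρ.2.1 ∈ A.P1 ∧ ρ.2.2 ∈ A.T1 ∧ tval ρ ≠ 0 ∧
        ∃ e : X × X, e.1 ∈ A.T1 ∧ e.2 ∈ A.T1 ∧ ts.1.2.2 * e.1 = ts.2.1 * e.2 ∧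
          ts.1.2.2 * e.1 ≠ 0 ∧ ρ.1 = ts.1.1 * e.1 ∧ ρ.2.2 = ts.2.2.2 * e.2 ∧
          A.deg ts.1.2.2 + A.deg e.1 = A.deg ts.1.2.2 ⊔ A.deg ts.2.1 ∧
          A.deg ts.2.1 + A.deg e.2 = A.deg ts.1.2.2 ⊔ A.deg ts.2.1) ∧
       (∀ ρ ∈ uu, ∀ ρ' ∈ uu, ρ.1 = ρ'.1 → ρ = ρ') ∧
       (∀ ρ ∈ uu, ∀ ρ' ∈ uu, ρ.2.2 = ρ'.2.2 → ρ = ρ') ∧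
       tval ts.1 * tval ts.2 = ∑ ρ ∈ uu, tval ρ) := by
    intro ts
    by_cases h : ts.1 ∈ s ∧ ts.2 ∈ s'
    · obtain ⟨h1, h2⟩ := h
      obtain ⟨hT1, hP1, hT1', _⟩ := hmem _ h1
      obtain ⟨hT2, hP2, hT2', _⟩ := hmem' _ h2
      obtain ⟨uu, ha, hb, hc, hd⟩ := A.std_mul h0 hT1 hP1 hT1' hT2 hP2 hT2'
      exact ⟨uu, fun _ _ => ⟨ha, hb, hc, hd⟩⟩
    · exact ⟨∅, fun h1 h2 => absurd ⟨h1, h2⟩ h⟩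
  choose u hu using key
  -- cross determination by the left leg
  have detL : ∀ a ∈ s ×ˢ s', ∀ b ∈ s ×ˢ s', ∀ ρ ∈ u a, ∀ ρ' ∈ u b,
      ρ.1 = ρ'.1 → a = b ∧ ρ = ρ' := by
    intro a ha b hb ρ hρ ρ' hρ' heq
    obtain ⟨ha1, ha2⟩ := Finset.mem_product.1 ha
    obtain ⟨hb1, hb2⟩ := Finset.mem_product.1 hb
    obtain ⟨Sa, La, _, _⟩ := hu a ha1 ha2
    obtain ⟨Sb, _, _, _⟩ := hu b hb1 hb2
    obtain ⟨_, _, _, m4, e, he1, he2, he3, he4, he5, he6, _, _⟩ := Sa ρ hρ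
    obtain ⟨_, _, _, n4, f, hf1, hf2, hf3, hf4, hf5, hf6, _, _⟩ := Sb ρ' hρ'
    have hne : a.1.1 * e.1 ≠ 0 := by rw [← he5]; exact tval_ne_zero_left m4
    have heq2 : a.1.1 * e.1 = b.1.1 * f.1 := by rw [← he5, ← hf5, heq]
    obtain ⟨g1, g2⟩ := A.factor_unique (hmem _ ha1).1 he1 (hmem _ hb1).1 hf1 heq2 hne
      (hdeg _ ha1 _ hb1).1
    have hτ : a.1 = b.1 := by
      by_contra hne'
      exact (hdist _ ha1 _ hb1 hne').1 g1
    have hγprod : a.2.1 * e.2 = b.2.1 * f.2 := by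
      rw [← he3, ← hf3, hτ, g2]
    have hγne : a.2.1 * e.2 ≠ 0 := he3 ▸ he4
    obtain ⟨g3, _⟩ := A.factor_unique (hmem' _ ha2).1 he2 (hmem' _ hb2).1 hf2 hγprod hγne
      (hdeg' _ ha2 _ hb2).1
    have hσ : a.2 = b.2 := by
      by_contra hne'
      exact (hdist' _ ha2 _ hb2 hne').1 g3
    have hab : a = b := Prod.ext_iff.2 ⟨hτ, hσ⟩
    subst hab
    exact ⟨rfl, La ρ hρ ρ' hρ' heq⟩
  -- cross determination by the right leg
  have detR : ∀ a ∈ s ×ˢ s', ∀ b ∈ s ×ˢ s', ∀ ρ ∈ u a, ∀ ρ' ∈ u b,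
      ρ.2.2 = ρ'.2.2 → a = b ∧ ρ = ρ' := by
    intro a ha b hb ρ hρ ρ' hρ' heq
    obtain ⟨ha1, ha2⟩ := Finset.mem_product.1 ha
    obtain ⟨hb1, hb2⟩ := Finset.mem_product.1 hb
    obtain ⟨Sa, _, Ra, _⟩ := hu a ha1 ha2
    obtain ⟨Sb, _, _, _⟩ := hu b hb1 hb2
    obtain ⟨_, _, _, m4, e, he1, he2, he3, he4, he5, he6, _, _⟩ := Sa ρ hρ
    obtain ⟨_, _, _, n4, f, hf1, hf2, hf3, hf4, hf5, hf6, _, _⟩ := Sb ρ' hρ'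
    have hne : a.2.2.2 * e.2 ≠ 0 := by rw [← he6]; exact tval_ne_zero_right m4
    have heq2 : a.2.2.2 * e.2 = b.2.2.2 * f.2 := by rw [← he6, ← hf6, heq]
    obtain ⟨g1, g2⟩ := A.factor_unique (hmem' _ ha2).2.2.1 he2 (hmem' _ hb2).2.2.1 hf2 heq2 hne
      (hdeg' _ ha2 _ hb2).2
    have hσ : a.2 = b.2 := by
      by_contra hne'
      exact (hdist' _ ha2 _ hb2 hne').2 g1
    have hβprod : a.1.2.2 * e.1 = b.1.2.2 * f.1 := by
      rw [he3, hf3, hσ, g2]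
    have hβne : a.1.2.2 * e.1 ≠ 0 := he4
    obtain ⟨g3, _⟩ := A.factor_unique (hmem _ ha1).2.2.1 he1 (hmem _ hb1).2.2.1 hf1 hβprod hβne
      (hdeg _ ha1 _ hb1).2
    have hτ : a.1 = b.1 := by
      by_contra hne'
      exact (hdist _ ha1 _ hb1 hne').2 g3
    have hab : a = b := Prod.ext_iff.2 ⟨hτ, hσ⟩
    subst hab
    exact ⟨rfl, Ra ρ hρ ρ' hρ' heq⟩
  have hdisj : (↑(s ×ˢ s') : Set ((X × X × X) × (X × X × X))).PairwiseDisjoint u := by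
    intro a ha b hb hab
    rw [Finset.mem_coe] at ha hb
    rw [Function.onFun, Finset.disjoint_left]
    intro ρ hρa hρb
    exact hab (detL a ha b hb ρ hρa ρ hρb rfl).1
  refine ⟨(s ×ˢ s').biUnion u, ?_, ?_, ?_, ?_⟩
  · intro ρ hρ
    obtain ⟨a, ha, hρa⟩ := Finset.mem_biUnion.1 hρ
    obtain ⟨ha1, ha2⟩ := Finset.mem_product.1 ha
    obtain ⟨Sa, _, _, _⟩ := hu a ha1 ha2
    obtain ⟨m1, m2, m3, m4, _⟩ := Sa ρ hρa
    exact ⟨m1, m2, m3, m4⟩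
  · intro ρ hρ σ hσ
    obtain ⟨a, ha, hρa⟩ := Finset.mem_biUnion.1 hρ
    obtain ⟨b, hb, hσb⟩ := Finset.mem_biUnion.1 hσ
    obtain ⟨ha1, ha2⟩ := Finset.mem_product.1 ha
    obtain ⟨hb1, hb2⟩ := Finset.mem_product.1 hb
    obtain ⟨Sa, _, _, _⟩ := hu a ha1 ha2
    obtain ⟨Sb, _, _, _⟩ := hu b hb1 hb2
    obtain ⟨_, _, _, m4, e, he1, he2, he3, he4, he5, he6, he7, he8⟩ := Sa ρ hρa
    obtain ⟨_, _, _, n4, f, hf1, hf2, hf3, hf4, hf5, hf6, hf7, hf8⟩ := Sb σ hσb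
    have hβ : A.deg a.1.2.2 = A.deg b.1.2.2 := (hdeg _ ha1 _ hb1).2
    have hγ : A.deg a.2.1 = A.deg b.2.1 := (hdeg' _ ha2 _ hb2).1
    have he1' : A.deg e.1 = A.deg f.1 := by
      have h7 : A.deg a.1.2.2 + A.deg e.1 = A.deg a.1.2.2 + A.deg f.1 := by
        rw [he7, hβ, hγ, hf7]
      exact add_left_cancel h7
    have he2' : A.deg e.2 = A.deg f.2 := by
      have h8 : A.deg a.2.1 + A.deg e.2 = A.deg a.2.1 + A.deg f.2 := by
        rw [he8, hβ, hγ, hf8]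
      exact add_left_cancel h8
    constructor
    · rw [he5, hf5, A.deg_mul1 (hmem _ ha1).1 he1 (he5 ▸ tval_ne_zero_left m4),
        A.deg_mul1 (hmem _ hb1).1 hf1 (hf5 ▸ tval_ne_zero_left n4),
        (hdeg _ ha1 _ hb1).1, he1']
    · rw [he6, hf6, A.deg_mul1 (hmem' _ ha2).2.2.1 he2 (he6 ▸ tval_ne_zero_right m4),
        A.deg_mul1 (hmem' _ hb2).2.2.1 hf2 (hf6 ▸ tval_ne_zero_right n4),
        (hdeg' _ ha2 _ hb2).2, he2']
  · intro ρ hρ σ hσ hne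
    obtain ⟨a, ha, hρa⟩ := Finset.mem_biUnion.1 hρ
    obtain ⟨b, hb, hσb⟩ := Finset.mem_biUnion.1 hσ
    constructor
    · intro heq
      exact hne (detL a ha b hb ρ hρa σ hσb heq).2
    · intro heq
      exact hne (detR a ha b hb ρ hρa σ hσb heq).2
  · rw [Finset.sum_mul_sum, Finset.sum_biUnion hdisj, ← Finset.sum_product']
    apply Finset.sum_congr rfl
    intro a ha
    obtain ⟨ha1, ha2⟩ := Finset.mem_product.1 ha
    obtain ⟨_, _, _, Ea⟩ := hu a ha1 ha2
    exact Ea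


lemma tval_star {τ : X × X × X} (hp : τ.2.1 ∈ A.P1) :
    star (tval τ) = tval (τ.2.2, τ.2.1, τ.1) := by
  simp only [tval, star_mul, star_star, A.p1_star hp, mul_assoc]

lemma rep_star {w : X} (hw : A.Rep w) : A.Rep (star w) := by
  classical
  obtain ⟨s, hmem, hdeg, hdist, rfl⟩ := hw
  have hinj : ∀ τ ∈ s, ∀ σ ∈ s,
      (fun τ : X × X × X => (τ.2.2, τ.2.1, τ.1)) τ
        = (fun τ : X × X × X => (τ.2.2, τ.2.1, τ.1)) σ → τ = σ := by
    intro τ hτ σ hσ heq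
    by_contra hne
    exact (hdist τ hτ σ hσ hne).2 (congrArg Prod.fst heq)
  refine ⟨s.image (fun τ => (τ.2.2, τ.2.1, τ.1)), ?_, ?_, ?_, ?_⟩
  · intro τ hτ
    obtain ⟨σ, hσ, rfl⟩ := Finset.mem_image.1 hτ
    obtain ⟨m1, m2, m3, m4⟩ := hmem σ hσ
    refine ⟨m3, m2, m1, ?_⟩
    rw [← A.tval_star m2]
    simpa using m4
  · intro τ hτ σ hσ
    obtain ⟨τ', hτ', rfl⟩ := Finset.mem_image.1 hτ
    obtain ⟨σ', hσ', rfl⟩ := Finset.mem_image.1 hσ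
    exact ⟨(hdeg τ' hτ' σ' hσ').2, (hdeg τ' hτ' σ' hσ').1⟩
  · intro τ hτ σ hσ hne
    obtain ⟨τ', hτ', rfl⟩ := Finset.mem_image.1 hτ
    obtain ⟨σ', hσ', rfl⟩ := Finset.mem_image.1 hσ
    have hne' : τ' ≠ σ' := fun h => hne (by rw [h])
    exact ⟨(hdist τ' hτ' σ' hσ' hne').2, (hdist τ' hτ' σ' hσ' hne').1⟩
  · rw [star_sum, Finset.sum_image hinj]
    apply Finset.sum_congr rfl
    intro τ hτ
    exact A.tval_star (hmem τ hτ).2.1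

lemma std_pi {α p β : X} (hα : α ∈ A.T1) (hp : p ∈ A.P1) (hβ : β ∈ A.T1) :
    (α * p * star β) * star (α * p * star β) * (α * p * star β) = α * p * star β := by
  obtain ⟨qα, hqα, hsα, hxα, _⟩ := A.source hα
  obtain ⟨qβ, hqβ, hsβ, _, hsβ'⟩ := A.source hβ
  have hstar : star (α * p * star β) = β * (p * star α) := by
    simp only [star_mul, star_star, A.p1_star hp, mul_assoc]
  rw [hstar]
  have h1 : (α * p * star β) * (β * (p * star α)) * (α * p * star β)
      = α * (p * ((star β * β) * (p * ((star α * α) * (p * star β))))) := by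
    simp only [mul_assoc]
  rw [h1, hsβ, hsα]
  have c2 : qα * (p * star β) = p * (qα * star β) := by
    rw [← mul_assoc, A.p1_comm hqα hp, mul_assoc]
  rw [c2]
  have c3 : p * (p * (qα * star β)) = p * (qα * star β) := by
    rw [← mul_assoc, A.p1_idem hp]
  rw [c3]
  have c4 : qβ * (p * (qα * star β)) = p * (qβ * (qα * star β)) := by
    rw [← mul_assoc, A.p1_comm hqβ hp, mul_assoc]
  rw [c4]
  have c5 : p * (p * (qβ * (qα * star β))) = p * (qβ * (qα * star β)) := by
    rw [← mul_assoc, A.p1_idem hp]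
  rw [c5]
  have c6 : qβ * (qα * star β) = qα * (qβ * star β) := by
    rw [← mul_assoc, A.p1_comm hqβ hqα, mul_assoc]
  rw [c6, hsβ', ← c2, ← mul_assoc, hxα, mul_assoc]

lemma tval_mul_star_tval_eq_zero {τ σ : X × X × X}
    (hmτ : τ.1 ∈ A.T1 ∧ τ.2.1 ∈ A.P1 ∧ τ.2.2 ∈ A.T1)
    (hmσ : σ.1 ∈ A.T1 ∧ σ.2.1 ∈ A.P1 ∧ σ.2.2 ∈ A.T1)
    (hdegβ : A.deg τ.2.2 = A.deg σ.2.2) (hneβ : τ.2.2 ≠ σ.2.2) :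
    tval τ * star (tval σ) = 0 := by
  have hstar : star (tval σ) = σ.2.2 * (σ.2.1 * star σ.1) := by
    simp only [tval, star_mul, star_star, A.p1_star hmσ.2.1, mul_assoc]
  have h0 : star τ.2.2 * σ.2.2 = 0 := A.orth_of_ne hmτ.2.2 hmσ.2.2 hdegβ hneβ
  calc tval τ * star (tval σ)
      = τ.1 * (τ.2.1 * ((star τ.2.2 * σ.2.2) * (σ.2.1 * star σ.1))) := by
        rw [hstar]; simp only [tval, mul_assoc]
    _ = 0 := by rw [h0, zero_mul, mul_zero, mul_zero]

lemma star_tval_mul_tval_eq_zero {τ σ : X × X × X}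
    (hmτ : τ.1 ∈ A.T1 ∧ τ.2.1 ∈ A.P1 ∧ τ.2.2 ∈ A.T1)
    (hmσ : σ.1 ∈ A.T1 ∧ σ.2.1 ∈ A.P1 ∧ σ.2.2 ∈ A.T1)
    (hdegα : A.deg τ.1 = A.deg σ.1) (hneα : τ.1 ≠ σ.1) :
    star (tval τ) * tval σ = 0 := by
  have hstar : star (tval τ) = τ.2.2 * (τ.2.1 * star τ.1) := by
    simp only [tval, star_mul, star_star, A.p1_star hmτ.2.1, mul_assoc]
  have h0 : star τ.1 * σ.1 = 0 := A.orth_of_ne hmτ.1 hmσ.1 hdegα hneα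
  calc star (tval τ) * tval σ
      = τ.2.2 * (τ.2.1 * ((star τ.1 * σ.1) * (σ.2.1 * star σ.2.2))) := by
        rw [hstar]; simp only [tval, mul_assoc]
    _ = 0 := by rw [h0, zero_mul, mul_zero, mul_zero]

lemma rep_diag {s : Finset (X × X × X)}
    (hmem : ∀ τ ∈ s, τ.1 ∈ A.T1 ∧ τ.2.1 ∈ A.P1 ∧ τ.2.2 ∈ A.T1 ∧ tval τ ≠ 0)
    (hdeg : ∀ τ ∈ s, ∀ σ ∈ s, A.deg τ.1 = A.deg σ.1 ∧ A.deg τ.2.2 = A.deg σ.2.2)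
    (hdist : ∀ τ ∈ s, ∀ σ ∈ s, τ ≠ σ → τ.1 ≠ σ.1 ∧ τ.2.2 ≠ σ.2.2) :
    (∑ τ ∈ s, tval τ) * star (∑ τ ∈ s, tval τ) = ∑ τ ∈ s, tval τ * star (tval τ) := by
  rw [star_sum, Finset.sum_mul_sum]
  apply Finset.sum_congr rfl
  intro τ hτ
  apply Finset.sum_eq_single_of_mem τ hτ
  intro σ hσ hne
  exact A.tval_mul_star_tval_eq_zero
    ⟨(hmem τ hτ).1, (hmem τ hτ).2.1, (hmem τ hτ).2.2.1⟩
    ⟨(hmem σ hσ).1, (hmem σ hσ).2.1, (hmem σ hσ).2.2.1⟩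
    (hdeg τ hτ σ hσ).2 (hdist τ hτ σ hσ (Ne.symm hne)).2

lemma rep_pi {w : X} (hw : A.Rep w) : w * star w * w = w := by
  obtain ⟨s, hmem, hdeg, hdist, rfl⟩ := hw
  rw [A.rep_diag hmem hdeg hdist, Finset.sum_mul_sum]
  apply Finset.sum_congr rfl
  intro τ hτ
  rw [Finset.sum_eq_single_of_mem τ hτ]
  · exact A.std_pi (hmem τ hτ).1 (hmem τ hτ).2.1 (hmem τ hτ).2.2.1
  · intro σ hσ hne
    rw [mul_assoc,
      A.star_tval_mul_tval_eq_zero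
        ⟨(hmem τ hτ).1, (hmem τ hτ).2.1, (hmem τ hτ).2.2.1⟩
        ⟨(hmem σ hσ).1, (hmem σ hσ).2.1, (hmem σ hσ).2.2.1⟩
        (hdeg τ hτ σ hσ).1 (hdist τ hτ σ hσ (Ne.symm hne)).1,
      mul_zero]

/-- Sums of terms of the form `μ c μ*` with `μ ∈ 𝒯₁`, `c ∈ 𝒫₁`. -/
def SAP (A : SemigraphAlgebra k X) (w : X) : Prop :=
  ∃ (s : Finset (X × X × X)) (c : X × X × X → X),
    (∀ τ ∈ s, τ.1 ∈ A.T1 ∧ c τ ∈ A.P1) ∧ w = ∑ τ ∈ s, τ.1 * c τ * star τ.1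

lemma rep_sap {w : X} (hw : A.Rep w) : A.SAP (w * star w) := by
  classical
  obtain ⟨s, hmem, hdeg, hdist, rfl⟩ := hw
  have hq : ∀ τ : X × X × X, ∃ qq, τ ∈ s →
      (qq ∈ A.P1 ∧ star τ.2.2 * τ.2.2 = qq) := by
    intro τ
    by_cases hτ : τ ∈ s
    · obtain ⟨qq, h1, h2, _⟩ := A.source (hmem τ hτ).2.2.1
      exact ⟨qq, fun _ => ⟨h1, h2⟩⟩
    · exact ⟨1, fun h => absurd h hτ⟩
  choose qq hqq using hq
  refine ⟨s, fun τ => τ.2.1 * qq τ * τ.2.1, ?_, ?_⟩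
  · intro τ hτ
    exact ⟨(hmem τ hτ).1,
      A.p1_mul (A.p1_mul (hmem τ hτ).2.1 (hqq τ hτ).1) (hmem τ hτ).2.1⟩
  · rw [A.rep_diag hmem hdeg hdist]
    apply Finset.sum_congr rfl
    intro τ hτ
    have hstar : star (tval τ) = τ.2.2 * (τ.2.1 * star τ.1) := by
      simp only [tval, star_mul, star_star, A.p1_star (hmem τ hτ).2.1, mul_assoc]
    calc tval τ * star (tval τ)
        = τ.1 * (τ.2.1 * ((star τ.2.2 * τ.2.2) * (τ.2.1 * star τ.1))) := by
          rw [hstar]; simp only [tval, mul_assoc]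
      _ = τ.1 * (τ.2.1 * qq τ * τ.2.1) * star τ.1 := by
          rw [(hqq τ hτ).2]; simp only [mul_assoc]

lemma sap_selfadj {w : X} (hw : A.SAP w) : star w = w := by
  obtain ⟨s, c, hmem, rfl⟩ := hw
  rw [star_sum]
  apply Finset.sum_congr rfl
  intro τ hτ
  simp only [star_mul, star_star, A.p1_star (hmem τ hτ).2, mul_assoc]

lemma sap_term_selfadj (h0 : (1:X) ≠ 0) {a c b d : X}
    (ha : a ∈ A.T1) (hc : c ∈ A.P1) (hb : b ∈ A.T1) (hd : d ∈ A.P1) :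
    star ((a * c * star a) * (b * d * star b)) = (a * c * star a) * (b * d * star b) := by
  obtain ⟨s, hspec, _, _, hprod⟩ := A.std_mul h0 ha hc ha hb hd hb
  rw [hprod, star_sum]
  apply Finset.sum_congr rfl
  intro ρ hρ
  obtain ⟨_, m2, _, _, e, _, _, he3, _, he5, he6, _, _⟩ := hspec ρ hρ
  have hρeq : ρ.2.2 = ρ.1 := by rw [he5, he6, ← he3]
  rw [A.tval_star m2]
  simp only [tval, hρeq]

lemma sap_mul_selfadj (h0 : (1:X) ≠ 0) {u v : X} (hu : A.SAP u) (hv : A.SAP v) :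
    star (u * v) = u * v := by
  obtain ⟨s, c, hmem, rfl⟩ := hu
  obtain ⟨s', c', hmem', rfl⟩ := hv
  rw [Finset.sum_mul_sum, star_sum]
  apply Finset.sum_congr rfl
  intro τ hτ
  rw [star_sum]
  apply Finset.sum_congr rfl
  intro σ hσ
  exact A.sap_term_selfadj h0 (hmem τ hτ).1 (hmem τ hτ).2 (hmem' σ hσ).1 (hmem' σ hσ).2

lemma sap_comm (h0 : (1:X) ≠ 0) {u v : X} (hu : A.SAP u) (hv : A.SAP v) :
    u * v = v * u := by
  have h1 := A.sap_mul_selfadj h0 hu hv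
  rw [star_mul, A.sap_selfadj hu, A.sap_selfadj hv] at h1
  exact h1.symm


lemma rep_zero : A.Rep 0 :=
  ⟨∅, by simp, by simp, by simp, by simp⟩

lemma rep_gen {x : X} (hx : x ∈ A.T ∪ A.P) : A.Rep x ∧ A.Rep (star x) := by
  rcases hx with hx | hx
  · constructor
    · refine ⟨{(x, 1, 1)}, ?_, ?_, ?_, ?_⟩
      · intro τ hτ
        rw [Finset.mem_singleton] at hτ
        subst hτ
        refine ⟨Set.mem_insert_of_mem _ hx, A.one_mem_P1, A.one_mem_T1, ?_⟩
        simpa [tval] using A.T_ne_zero x hx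
      · intro τ hτ σ hσ
        rw [Finset.mem_singleton] at hτ hσ
        subst hτ; subst hσ; exact ⟨rfl, rfl⟩
      · intro τ hτ σ hσ hne
        rw [Finset.mem_singleton] at hτ hσ
        exact absurd (hτ.trans hσ.symm) hne
      · simp [tval]
    · refine ⟨{(1, 1, x)}, ?_, ?_, ?_, ?_⟩
      · intro τ hτ
        rw [Finset.mem_singleton] at hτ
        subst hτ
        refine ⟨A.one_mem_T1, A.one_mem_P1, Set.mem_insert_of_mem _ hx, ?_⟩
        simpa [tval] using star_ne_zero.2 (A.T_ne_zero x hx)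
      · intro τ hτ σ hσ
        rw [Finset.mem_singleton] at hτ hσ
        subst hτ; subst hσ; exact ⟨rfl, rfl⟩
      · intro τ hτ σ hσ hne
        rw [Finset.mem_singleton] at hτ hσ
        exact absurd (hτ.trans hσ.symm) hne
      · simp [tval]
  · have hstar : star x = x := (A.P_isProj x hx).2
    rcases eq_or_ne x 0 with rfl | hne0
    · rw [star_zero]
      exact ⟨A.rep_zero, A.rep_zero⟩
    · have hrep : A.Rep x := by
        refine ⟨{(1, x, 1)}, ?_, ?_, ?_, ?_⟩
        · intro τ hτ
          rw [Finset.mem_singleton] at hτ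
          subst hτ
          refine ⟨A.one_mem_T1, Set.mem_insert_of_mem _ hx, A.one_mem_T1, ?_⟩
          simpa [tval] using hne0
        · intro τ hτ σ hσ
          rw [Finset.mem_singleton] at hτ hσ
          subst hτ; subst hσ; exact ⟨rfl, rfl⟩
        · intro τ hτ σ hσ hne
          rw [Finset.mem_singleton] at hτ hσ
          exact absurd (hτ.trans hσ.symm) hne
        · simp [tval]
      exact ⟨hrep, by rw [hstar]; exact hrep⟩

lemma rep_word (h0 : (1:X) ≠ 0) {l : List (X × Bool)} (hl : A.IsWordList l) :
    A.Rep (evalWord l) := by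
  obtain ⟨hne, hmem⟩ := hl
  induction l with
  | nil => exact absurd rfl hne
  | cons a l ih =>
    have ha := hmem a (List.mem_cons_self)
    have hga : A.Rep (if a.2 then star a.1 else a.1) := by
      rcases A.rep_gen ha with ⟨h1, h2⟩
      cases a.2
      · simpa using h1
      · simpa using h2
    rcases eq_or_ne l [] with rfl | hlne
    · simpa [evalWord] using hga
    · have hrest := ih hlne (fun b hb => hmem b (List.mem_cons_of_mem _ hb))
      have hev : evalWord (a :: l) = (if a.2 then star a.1 else a.1) * evalWord l := by
        simp [evalWord]
      rw [hev]
      exact A.rep_mul h0 hga hrest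

lemma star_list_prod (L : List X) : star L.prod = (L.map star).reverse.prod := by
  induction L with
  | nil => simp
  | cons a L ih => simp [List.prod_cons, star_mul, ih, List.prod_append]

lemma evalWord_starWord (l : List (X × Bool)) : evalWord (starWord l) = star (evalWord l) := by
  rw [evalWord, evalWord, starWord, List.map_map, star_list_prod]
  congr 1
  rw [List.map_map, ← List.map_reverse]
  apply List.map_congr_left
  intro a _
  cases ha : a.2 <;> simp [ha, Function.comp]

end SemigraphAlgebra


open SemigraphAlgebra in
/-- Lemma `semigraphwordrep`(a): in a semigraph algebra, the words form an
inverse semigroup of partial isometries: every word is a partial isometry, the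
adjoint of a word is a word, products of words are words, and source and
range projections of all words commute. -/
theorem SemigraphAlgebra.words_inverse_semigroup
    {k X : Type*} [Ring X] [StarRing X] [Algebra ℂ X]
    (A : SemigraphAlgebra k X) (l l' : List (X × Bool))
    (hl : A.IsWordList l) (hl' : A.IsWordList l') :
    evalWord l * star (evalWord l) * evalWord l = evalWord l ∧
    star (evalWord l) = evalWord (starWord l) ∧
    A.IsWordList (starWord l) ∧
    A.IsWordList (l ++ l') ∧
    evalWord (l ++ l') = evalWord l * evalWord l' ∧
    (evalWord l * star (evalWord l)) * (evalWord l' * star (evalWord l')) =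
      (evalWord l' * star (evalWord l')) * (evalWord l * star (evalWord l)) ∧
    (evalWord l * star (evalWord l)) * (star (evalWord l') * evalWord l') =
      (star (evalWord l') * evalWord l') * (evalWord l * star (evalWord l)) ∧
    (star (evalWord l) * evalWord l) * (star (evalWord l') * evalWord l') =
      (star (evalWord l') * evalWord l') * (star (evalWord l) * evalWord l) := by
  classical
  have part2 : star (evalWord l) = evalWord (starWord l) := (evalWord_starWord l).symm
  have part3 : A.IsWordList (starWord l) := by
    constructor
    · intro h
      have hnil : l = [] := by simpa [starWord] using h
      exact hl.1 hnil
    · intro a ha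
      rw [starWord, List.mem_map] at ha
      obtain ⟨b, hb, rfl⟩ := ha
      exact hl.2 b (List.mem_reverse.1 hb)
  have part4 : A.IsWordList (l ++ l') := by
    constructor
    · simp [hl.1]
    · intro a ha
      rcases List.mem_append.1 ha with h | h
      · exact hl.2 a h
      · exact hl'.2 a h
  have part5 : evalWord (l ++ l') = evalWord l * evalWord l' := by
    rw [evalWord, evalWord, evalWord, List.map_append, List.prod_append]
  by_cases h0 : (1:X) = 0
  · have hz : ∀ x : X, x = 0 := fun x => by rw [← mul_one x, h0, mul_zero]
    have heq : ∀ a b : X, a = b := fun a b => (hz a).trans (hz b).symm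
    exact ⟨heq _ _, part2, part3, part4, part5, heq _ _, heq _ _, heq _ _⟩
  · have hw := A.rep_word h0 hl
    have hw' := A.rep_word h0 hl'
    have sapr : A.SAP (evalWord l * star (evalWord l)) := A.rep_sap hw
    have sapr' : A.SAP (evalWord l' * star (evalWord l')) := A.rep_sap hw'
    have saps : A.SAP (star (evalWord l) * evalWord l) := by
      have h1 := A.rep_sap (A.rep_star hw)
      rwa [star_star] at h1
    have saps' : A.SAP (star (evalWord l') * evalWord l') := by
      have h1 := A.rep_sap (A.rep_star hw')
      rwa [star_star] at h1
    exact ⟨A.rep_pi hw, part2, part3, part4, part5,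
      A.sap_comm h0 sapr sapr', A.sap_comm h0 sapr saps', A.sap_comm h0 saps saps'⟩
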